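/- For every real number d with 0 ≤ d ≤ 2√3, the probabilistic-sum identity (1/4)·f_I(d) + (1/2)·f_P(d) + (1/8)·f_LD(d) + (1/8)·f_SD(d) = (1/2)·f_I(d/2) holds, where f_I, f_P, f_LD, f_SD are the explicit piecewise density functions defined in the context. (This is the recursion validating that the distance density in a rhombus of side 2, which by scaling is (1/2)·f_I(d/2), equals the probabilistic mixture of the four adjacency cases of the four unit sub-rhombuses.) -/
import Mathlib


open Real

noncomputable section

/-- Density of the distance between two uniform points in the same unit rhombus. -/
def fI (d : ℝ) : ℝ := 2 * d *
  (if 0 ≤ d ∧ d ≤ Real.sqrt 3 / 2 then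
      (4/3 + 2*Real.pi/(9*Real.sqrt 3))*d^2 - (16/3)*d + 2*Real.pi/Real.sqrt 3
    else if Real.sqrt 3 / 2 ≤ d ∧ d ≤ 1 then
      (8/Real.sqrt 3)*(1 + d^2/3)*Real.arcsin (Real.sqrt 3/(2*d)) + (4/3 - 10*Real.pi/(9*Real.sqrt 3))*d^2
        - (16/3)*d + (10/3)*Real.sqrt (4*d^2 - 3) - 2*Real.pi/Real.sqrt 3
    else if 1 ≤ d ∧ d ≤ Real.sqrt 3 then
      (4/Real.sqrt 3)*(1 - d^2/3)*Real.arcsin (Real.sqrt 3/(2*d)) - (2/3 - 2*Real.pi/(9*Real.sqrt 3))*d^2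
        + Real.sqrt (4*d^2 - 3) - 2*Real.pi/(3*Real.sqrt 3) - 1
    else 0)

/-- Density of the distance between uniform points in two parallel rhombuses sharing a side. -/
def fP (d : ℝ) : ℝ := 2 * d *
  (if 0 ≤ d ∧ d ≤ Real.sqrt 3 / 2 then
      (4/3)*d - (2/3 + Real.pi/(9*Real.sqrt 3))*d^2
    else if Real.sqrt 3 / 2 ≤ d ∧ d ≤ 1 then
      -(2/Real.sqrt 3)*(d^2 + 2)*Real.arcsin (Real.sqrt 3/(2*d)) + (8*Real.pi/(9*Real.sqrt 3) - 2/3)*d^2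
        + (4/3)*d - (11/6)*Real.sqrt (4*d^2 - 3) + 2*Real.pi/Real.sqrt 3
    else if 1 ≤ d ∧ d ≤ Real.sqrt 3 then
      (4*d^2/(3*Real.sqrt 3))*Real.arcsin (Real.sqrt 3/(2*d)) + (2/3 - 2*Real.pi/(9*Real.sqrt 3))*d^2
        - (8/3)*d + Real.sqrt (4*d^2 - 3)/3 + 2*Real.pi/(3*Real.sqrt 3) + 1/2
    else if Real.sqrt 3 ≤ d ∧ d ≤ 2 then
      (2/Real.sqrt 3 - d^2/(3*Real.sqrt 3))*Real.arcsin (Real.sqrt 3/(2*d))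
        + (2/Real.sqrt 3 + d^2/(3*Real.sqrt 3))*Real.arcsin (Real.sqrt 3/d) + (1/3 - Real.pi/(9*Real.sqrt 3))*d^2
        - (8/3)*d + (7/12)*Real.sqrt (4*d^2 - 3) + Real.sqrt (d^2 - 3) + 3/4 - 2*Real.pi/(3*Real.sqrt 3)
    else if 2 ≤ d ∧ d ≤ Real.sqrt 7 then
      (2/Real.sqrt 3 - d^2/(3*Real.sqrt 3))*(Real.arcsin (Real.sqrt 3/(2*d)) + Real.arcsin (Real.sqrt 3/d))
        + (Real.pi/(9*Real.sqrt 3) - 1/3)*d^2 + (7/12)*Real.sqrt (4*d^2 - 3)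
        + Real.sqrt (d^2 - 3)/3 - 2*Real.pi/(3*Real.sqrt 3) - 5/4
    else 0)

/-- Density of the distance between uniform points in two long-diagonally adjacent rhombuses. -/
def fLD (d : ℝ) : ℝ := 2 * d *
  (if 0 ≤ d ∧ d ≤ 1 then
      (1/3 - Real.pi/(9*Real.sqrt 3))*d^2
    else if 1 ≤ d ∧ d ≤ Real.sqrt 3 then
      -(4*d^2/(3*Real.sqrt 3))*Real.arcsin (Real.sqrt 3/(2*d)) + (Real.pi/(3*Real.sqrt 3) - 1)*d^2
        + (8/3)*d - Real.sqrt (4*d^2 - 3)/3 - 1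
    else if Real.sqrt 3 ≤ d ∧ d ≤ 2 then
      (4/Real.sqrt 3)*(d^2/3 - 2)*Real.arcsin (Real.sqrt 3/(2*d)) + (1/3 - Real.pi/(9*Real.sqrt 3))*d^2
        + (8/3)*d - (7/3)*Real.sqrt (4*d^2 - 3) + 4*Real.pi/(3*Real.sqrt 3) + 1
    else if 2 ≤ d ∧ d ≤ Real.sqrt 7 then
      (4/Real.sqrt 3)*(d^2/3 - 2)*Real.arcsin (Real.sqrt 3/(2*d)) + (2*d^2/(3*Real.sqrt 3))*Real.arcsin (Real.sqrt 3/d)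
        + (1 - Real.pi/(3*Real.sqrt 3))*d^2 - (7/3)*Real.sqrt (4*d^2 - 3)
        + (2/3)*Real.sqrt (d^2 - 3) + 4*Real.pi/(3*Real.sqrt 3) + 3
    else if Real.sqrt 7 ≤ d ∧ d ≤ 2 * Real.sqrt 3 then
      (2/Real.sqrt 3)*(4 - d^2/3)*Real.arcsin (Real.sqrt 3/d) + (Real.pi/(9*Real.sqrt 3) - 1/3)*d^2
        + 2*Real.sqrt (d^2 - 3) - 4*Real.pi/(3*Real.sqrt 3) - 2
    else 0)

/-- Density of the distance between uniform points in two short-diagonally adjacent rhombuses. -/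
def fSD (d : ℝ) : ℝ := 2 * d *
  (if 0 ≤ d ∧ d ≤ Real.sqrt 3 / 2 then
      (1/3 + 2*Real.pi/(9*Real.sqrt 3))*d^2
    else if Real.sqrt 3 / 2 ≤ d ∧ d ≤ 1 then
      (8*d^2/(3*Real.sqrt 3))*Real.arcsin (Real.sqrt 3/(2*d)) + (1/3 - 10*Real.pi/(9*Real.sqrt 3))*d^2
        + (2/3)*Real.sqrt (4*d^2 - 3)
    else if 1 ≤ d ∧ d ≤ Real.sqrt 3 then
      -(4/Real.sqrt 3)*(d^2/3 + 2)*Real.arcsin (Real.sqrt 3/(2*d)) + (1/3 + 2*Real.pi/(9*Real.sqrt 3))*d^2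
        + (8/3)*d - 3*Real.sqrt (4*d^2 - 3) + 8*Real.pi/(3*Real.sqrt 3) + 1
    else if Real.sqrt 3 ≤ d ∧ d ≤ 2 then
      (8/Real.sqrt 3)*Real.arcsin (Real.sqrt 3/d) - d^2 + (8/3)*d + (8/3)*Real.sqrt (d^2 - 3)
        - 8*Real.pi/(3*Real.sqrt 3) - 4
    else 0)

end

theorem rhombus_density_recursion :
    ∀ d : ℝ, 0 ≤ d → d ≤ 2 * Real.sqrt 3 →
      (1/4) * fI d + (1/2) * fP d + (1/8) * fLD d + (1/8) * fSD d = (1/2) * fI (d/2) := by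
  intro d hd0 hdU
  have s3nn : (0:ℝ) ≤ Real.sqrt 3 := Real.sqrt_nonneg 3
  have hs3 : Real.sqrt 3 ^ 2 = 3 := Real.sq_sqrt (by norm_num)
  have s7nn : (0:ℝ) ≤ Real.sqrt 7 := Real.sqrt_nonneg 7
  have hs7 : Real.sqrt 7 ^ 2 = 7 := Real.sq_sqrt (by norm_num)
  have h1lt : (1:ℝ) < Real.sqrt 3 := by nlinarith
  have hlt2 : Real.sqrt 3 < 2 := by nlinarith
  have h2lt7 : (2:ℝ) < Real.sqrt 7 := by nlinarith
  have h7lt : Real.sqrt 7 < 2 * Real.sqrt 3 := by nlinarith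
  unfold fI fP fLD fSD
  rcases le_or_gt d (Real.sqrt 3 / 2) with hc1 | hc1
  · -- case 1 : 0 ≤ d ≤ √3/2
    rw [if_pos (show 0 ≤ d ∧ d ≤ Real.sqrt 3 / 2 from ⟨hd0, hc1⟩),
        if_pos (show 0 ≤ d ∧ d ≤ Real.sqrt 3 / 2 from ⟨hd0, hc1⟩),
        if_pos (show 0 ≤ d ∧ d ≤ 1 from ⟨hd0, by linarith⟩),
        if_pos (show 0 ≤ d ∧ d ≤ Real.sqrt 3 / 2 from ⟨hd0, hc1⟩),
        if_pos (show 0 ≤ d/2 ∧ d/2 ≤ Real.sqrt 3 / 2 from ⟨by linarith, by linarith⟩)]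
    ring
  · rcases le_or_gt d 1 with hc2 | hc2
    · -- case 2 : √3/2 < d ≤ 1
      have hn1 : ¬ (0 ≤ d ∧ d ≤ Real.sqrt 3 / 2) := by rintro ⟨-, h⟩; linarith
      rw [if_neg hn1, if_pos (show Real.sqrt 3 / 2 ≤ d ∧ d ≤ 1 from ⟨hc1.le, hc2⟩),
          if_neg hn1, if_pos (show Real.sqrt 3 / 2 ≤ d ∧ d ≤ 1 from ⟨hc1.le, hc2⟩),
          if_pos (show 0 ≤ d ∧ d ≤ 1 from ⟨hd0, hc2⟩),
          if_neg hn1, if_pos (show Real.sqrt 3 / 2 ≤ d ∧ d ≤ 1 from ⟨hc1.le, hc2⟩),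
          if_pos (show 0 ≤ d/2 ∧ d/2 ≤ Real.sqrt 3 / 2 from ⟨by linarith, by linarith⟩)]
      ring
    · rcases le_or_gt d (Real.sqrt 3) with hc3 | hc3
      · -- case 3 : 1 < d ≤ √3
        have hn1 : ¬ (0 ≤ d ∧ d ≤ Real.sqrt 3 / 2) := by rintro ⟨-, h⟩; linarith
        have hn2 : ¬ (Real.sqrt 3 / 2 ≤ d ∧ d ≤ 1) := by rintro ⟨-, h⟩; linarith
        have hn1' : ¬ (0 ≤ d ∧ d ≤ 1) := by rintro ⟨-, h⟩; linarith
        rw [if_neg hn1, if_neg hn2, if_pos (show 1 ≤ d ∧ d ≤ Real.sqrt 3 from ⟨hc2.le, hc3⟩),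
            if_neg hn1, if_neg hn2, if_pos (show 1 ≤ d ∧ d ≤ Real.sqrt 3 from ⟨hc2.le, hc3⟩),
            if_neg hn1', if_pos (show 1 ≤ d ∧ d ≤ Real.sqrt 3 from ⟨hc2.le, hc3⟩),
            if_neg hn1, if_neg hn2, if_pos (show 1 ≤ d ∧ d ≤ Real.sqrt 3 from ⟨hc2.le, hc3⟩),
            if_pos (show 0 ≤ d/2 ∧ d/2 ≤ Real.sqrt 3 / 2 from ⟨by linarith, by linarith⟩)]
        ring
      · rcases le_or_gt d 2 with hc4 | hc4
        · -- case 4 : √3 < d ≤ 2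
          have hn1 : ¬ (0 ≤ d ∧ d ≤ Real.sqrt 3 / 2) := by rintro ⟨-, h⟩; linarith
          have hn2 : ¬ (Real.sqrt 3 / 2 ≤ d ∧ d ≤ 1) := by rintro ⟨-, h⟩; linarith
          have hn3 : ¬ (1 ≤ d ∧ d ≤ Real.sqrt 3) := by rintro ⟨-, h⟩; linarith
          have hn1' : ¬ (0 ≤ d ∧ d ≤ 1) := by rintro ⟨-, h⟩; linarith
          have hh4 : Real.sqrt 3 ≤ d ∧ d ≤ 2 := ⟨hc3.le, hc4⟩
          rw [if_neg hn1, if_neg hn2, if_neg hn3,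
              if_neg hn1, if_neg hn2, if_neg hn3, if_pos hh4,
              if_neg hn1', if_neg hn3, if_pos hh4,
              if_neg hn1, if_neg hn2, if_neg hn3, if_pos hh4,
              if_neg (show ¬ (0 ≤ d/2 ∧ d/2 ≤ Real.sqrt 3 / 2) from by rintro ⟨-, h⟩; linarith),
              if_pos (show Real.sqrt 3 / 2 ≤ d/2 ∧ d/2 ≤ 1 from ⟨by linarith, by linarith⟩),
              show 2 * (d/2) = d from by ring,
              show 4 * (d/2)^2 - 3 = d^2 - 3 from by ring]
          ring
        · rcases le_or_gt d (Real.sqrt 7) with hc5 | hc5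
          · -- case 5 : 2 < d ≤ √7
            have hn1 : ¬ (0 ≤ d ∧ d ≤ Real.sqrt 3 / 2) := by rintro ⟨-, h⟩; linarith
            have hn2 : ¬ (Real.sqrt 3 / 2 ≤ d ∧ d ≤ 1) := by rintro ⟨-, h⟩; linarith
            have hn3 : ¬ (1 ≤ d ∧ d ≤ Real.sqrt 3) := by rintro ⟨-, h⟩; linarith
            have hn4 : ¬ (Real.sqrt 3 ≤ d ∧ d ≤ 2) := by rintro ⟨-, h⟩; linarith
            have hn1' : ¬ (0 ≤ d ∧ d ≤ 1) := by rintro ⟨-, h⟩; linarith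
            have hh5 : 2 ≤ d ∧ d ≤ Real.sqrt 7 := ⟨hc4.le, hc5⟩
            rw [if_neg hn1, if_neg hn2, if_neg hn3,
                if_neg hn1, if_neg hn2, if_neg hn3, if_neg hn4, if_pos hh5,
                if_neg hn1', if_neg hn3, if_neg hn4, if_pos hh5,
                if_neg hn1, if_neg hn2, if_neg hn3, if_neg hn4,
                if_neg (show ¬ (0 ≤ d/2 ∧ d/2 ≤ Real.sqrt 3 / 2) from by rintro ⟨-, h⟩; linarith),
                if_neg (show ¬ (Real.sqrt 3 / 2 ≤ d/2 ∧ d/2 ≤ 1) from by rintro ⟨-, h⟩; linarith),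
                if_pos (show 1 ≤ d/2 ∧ d/2 ≤ Real.sqrt 3 from ⟨by linarith, by linarith⟩),
                show 2 * (d/2) = d from by ring,
                show 4 * (d/2)^2 - 3 = d^2 - 3 from by ring]
            ring
          · -- case 6 : √7 < d ≤ 2√3
            have hn1 : ¬ (0 ≤ d ∧ d ≤ Real.sqrt 3 / 2) := by rintro ⟨-, h⟩; linarith
            have hn2 : ¬ (Real.sqrt 3 / 2 ≤ d ∧ d ≤ 1) := by rintro ⟨-, h⟩; linarith
            have hn3 : ¬ (1 ≤ d ∧ d ≤ Real.sqrt 3) := by rintro ⟨-, h⟩; linarith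
            have hn4 : ¬ (Real.sqrt 3 ≤ d ∧ d ≤ 2) := by rintro ⟨-, h⟩; linarith
            have hn5 : ¬ (2 ≤ d ∧ d ≤ Real.sqrt 7) := by rintro ⟨-, h⟩; linarith
            have hn1' : ¬ (0 ≤ d ∧ d ≤ 1) := by rintro ⟨-, h⟩; linarith
            rw [if_neg hn1, if_neg hn2, if_neg hn3,
                if_neg hn1, if_neg hn2, if_neg hn3, if_neg hn4, if_neg hn5,
                if_neg hn1', if_neg hn3, if_neg hn4, if_neg hn5,
                if_pos (show Real.sqrt 7 ≤ d ∧ d ≤ 2 * Real.sqrt 3 from ⟨hc5.le, hdU⟩),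
                if_neg hn1, if_neg hn2, if_neg hn3, if_neg hn4,
                if_neg (show ¬ (0 ≤ d/2 ∧ d/2 ≤ Real.sqrt 3 / 2) from by rintro ⟨-, h⟩; linarith),
                if_neg (show ¬ (Real.sqrt 3 / 2 ≤ d/2 ∧ d/2 ≤ 1) from by rintro ⟨-, h⟩; linarith),
                if_pos (show 1 ≤ d/2 ∧ d/2 ≤ Real.sqrt 3 from ⟨by linarith, by linarith⟩),
                show 2 * (d/2) = d from by ring,
                show 4 * (d/2)^2 - 3 = d^2 - 3 from by ring]
            ring
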